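/- For every n ≥ 1 there exists an injective group homomorphism Λ_n from the group (under composition) of increasing homeomorphisms of the interval [0, 1/(n+1)] onto itself into the group of homeomorphisms of Δ_n, such that every Λ_n(f) lies in COMFORT(Δ_n) and satisfies: for every x ∈ Δ_n and every index i with x_i ≤ 1/(n+1), (Λ_n(f)(x))_i = f(x_i). -/

import Mathlib

open scoped BigOperators

noncomputable section

/-- `Spx k` is the standard simplex on `k` coordinates, i.e. the standard simplex
`Δ_{k-1}` of the paper, as a subspace of `ℝ^k`. -/
abbrev Spx (k : ℕ) : Type := {x : Fin k → ℝ // x ∈ stdSimplex ℝ (Fin k)}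

lemma perm_mem {k : ℕ} (ϑ : Equiv.Perm (Fin k)) {x : Fin k → ℝ}
    (hx : x ∈ stdSimplex ℝ (Fin k)) :
    (fun i => x (ϑ i)) ∈ stdSimplex ℝ (Fin k) :=
  ⟨fun i => hx.1 (ϑ i), (Equiv.sum_comp ϑ x).trans hx.2⟩

/-- membership of `COMFORT (Δ_n)`: a self-homeomorphism of the standard simplex which
(i) respects coordinate permutations and (ii) keeps the order. -/
structure IsComfort {n : ℕ} (F : Spx (n+1) ≃ₜ Spx (n+1)) : Prop where
  perm : ∀ (ϑ : Equiv.Perm (Fin (n+1))) (x : Spx (n+1)),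
      ((F ⟨fun i => x.1 (ϑ i), perm_mem ϑ x.2⟩ : Spx (n+1)) : Fin (n+1) → ℝ)
        = fun i => (F x).1 (ϑ i)
  mono : ∀ (x : Spx (n+1)) (i j : Fin (n+1)), x.1 i ≤ x.1 j → (F x).1 i ≤ (F x).1 j

/-- the `α`-cross `♣_{n,α}` of `Δ_n`. -/
def cross (n : ℕ) (α : ℝ) : Set (Spx (n+1)) := {x | ∃ j, x.1 j = α}

/-- the boundary `BOU_n = ♣_{n,0}` of `Δ_n`. -/
def bou (n : ℕ) : Set (Spx (n+1)) := cross n 0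

/-- the barycenter `Center_n` of `Δ_n`. -/
def center (n : ℕ) : Spx (n+1) :=
  ⟨fun _ => 1/((n:ℝ)+1), by
    constructor
    · intro i
      positivity
    · rw [Finset.sum_const, Finset.card_univ, Fintype.card_fin, nsmul_eq_mul]
      push_cast
      field_simp⟩

/-- the minimal coordinate of a point of `Δ_n`. -/
def minCoord {n : ℕ} (x : Spx (n+1)) : ℝ :=
  Finset.univ.inf' Finset.univ_nonempty x.1

/-- the `α`-layer `Layer_{n,α}` of `Δ_n`. -/
def layer (n : ℕ) (α : ℝ) : Set (Spx (n+1)) := {x | minCoord x = α}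

/-- `Sponge (Δ_n)`: the points of `Δ_n` with pairwise distinct coordinates. -/
def sponge (n : ℕ) : Set (Spx (n+1)) := {x | ∀ i j, x.1 i = x.1 j → i = j}

namespace LamAux

variable {n : ℕ}

@[reducible] def c (n : ℕ) : ℝ := 1/((n:ℝ)+1)

lemma c_pos (n : ℕ) : 0 < c n := by unfold c; positivity

lemma c_nonneg (n : ℕ) : (0:ℝ) ≤ c n := (c_pos n).le

lemma sum_c (n : ℕ) : ∑ _i : Fin (n+1), c n = 1 := by
  rw [Finset.sum_const, Finset.card_univ, Fintype.card_fin, nsmul_eq_mul, c]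
  push_cast; field_simp

abbrev II (n : ℕ) := Set.Icc (0:ℝ) (c n)

/-- extension of `f` to `ℝ` by clipping. -/
def fe (f : II n ≃o II n) (t : ℝ) : ℝ := (f (Set.projIcc 0 (c n) (c_nonneg n) t) : ℝ)

lemma fe_mem (f : II n ≃o II n) (t : ℝ) : fe f t ∈ II n := (f _).2

lemma fe_nonneg (f : II n ≃o II n) (t : ℝ) : 0 ≤ fe f t := (fe_mem f t).1

lemma fe_le (f : II n ≃o II n) (t : ℝ) : fe f t ≤ c n := (fe_mem f t).2

lemma fe_cont (f : II n ≃o II n) : Continuous (fe f) :=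
  continuous_subtype_val.comp (f.continuous.comp continuous_projIcc)

lemma fe_mono (f : II n ≃o II n) : Monotone (fe f) :=
  fun _ _ h => f.monotone (Set.monotone_projIcc _ h)

lemma fe_of_mem (f : II n ≃o II n) {t : ℝ} (ht : t ∈ II n) :
    fe f t = (f ⟨t, ht⟩ : ℝ) := by
  rw [fe, Set.projIcc_of_mem]

lemma map_top (f : II n ≃o II n) :
    f ⟨c n, ⟨c_nonneg n, le_rfl⟩⟩ = ⟨c n, ⟨c_nonneg n, le_rfl⟩⟩ := by
  set m : II n := ⟨c n, ⟨c_nonneg n, le_rfl⟩⟩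
  have h1 : f m ≤ m := (f m).2.2
  have h2 : f.symm m ≤ m := (f.symm m).2.2
  have h3 : m ≤ f m := by
    calc m = f (f.symm m) := (f.apply_symm_apply m).symm
    _ ≤ f m := f.monotone h2
  exact le_antisymm h1 h3

lemma fe_of_ge (f : II n ≃o II n) {t : ℝ} (ht : c n ≤ t) : fe f t = c n := by
  rw [fe, Set.projIcc_of_right_le _ ht, map_top]

lemma fe_comp (f g : II n ≃o II n) (t : ℝ) : fe g (fe f t) = fe (f.trans g) t := by
  rw [fe_of_mem g (fe_mem f t)]
  simp [fe, Set.projIcc_val]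

lemma fe_eq_top (f : II n ≃o II n) {t : ℝ} (ht0 : 0 ≤ t) (ht : fe f t = c n) : c n ≤ t := by
  by_contra h
  push_neg at h
  have htm : t ∈ II n := ⟨ht0, h.le⟩
  rw [fe_of_mem f htm] at ht
  have : f ⟨t, htm⟩ = f ⟨c n, ⟨c_nonneg n, le_rfl⟩⟩ := by
    rw [map_top]; exact Subtype.ext ht
  have := f.injective this
  exact absurd (congrArg Subtype.val this) (ne_of_lt h)

/-- excess above `c`. -/
def Eb (n : ℕ) (x : Fin (n+1) → ℝ) : ℝ := ∑ i, max (x i - c n) 0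

/-- total shortfall of `f` image below `c`. -/
def Es (f : II n ≃o II n) (x : Fin (n+1) → ℝ) : ℝ := ∑ i, (c n - fe f (x i))

def Fm (f : II n ≃o II n) (x : Fin (n+1) → ℝ) : Fin (n+1) → ℝ :=
  fun i => fe f (x i) + max (x i - c n) 0 * (Es f x / Eb n x)

lemma Eb_nonneg (x : Fin (n+1) → ℝ) : 0 ≤ Eb n x :=
  Finset.sum_nonneg fun i _ => le_max_right _ _

lemma Es_nonneg (f : II n ≃o II n) (x : Fin (n+1) → ℝ) : 0 ≤ Es f x :=
  Finset.sum_nonneg fun i _ => sub_nonneg.2 (fe_le f (x i))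

lemma ratio_nonneg (f : II n ≃o II n) (x : Fin (n+1) → ℝ) : 0 ≤ Es f x / Eb n x :=
  div_nonneg (Es_nonneg f x) (Eb_nonneg x)

lemma Eb_eq_zero {x : Fin (n+1) → ℝ} (hx : x ∈ stdSimplex ℝ (Fin (n+1)))
    (h : Eb n x = 0) : ∀ i, x i = c n := by
  have hle : ∀ i, x i ≤ c n := by
    intro i
    by_contra hi
    push_neg at hi
    have h1 : 0 < max (x i - c n) 0 := lt_max_of_lt_left (by linarith)
    have h2 : max (x i - c n) 0 ≤ Eb n x :=
      Finset.single_le_sum (f := fun j => max (x j - c n) 0)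
        (fun j _ => le_max_right _ _) (Finset.mem_univ i)
    linarith
  have hsum : ∑ i, (c n - x i) = 0 := by
    rw [Finset.sum_sub_distrib, sum_c, hx.2, sub_self]
  have := (Finset.sum_eq_zero_iff_of_nonneg
    (fun i _ => sub_nonneg.2 (hle i))).1 hsum
  intro i
  have := this i (Finset.mem_univ i)
  linarith

lemma Es_eq_zero_of_Eb {x : Fin (n+1) → ℝ} (hx : x ∈ stdSimplex ℝ (Fin (n+1)))
    (f : II n ≃o II n) (h : Eb n x = 0) : Es f x = 0 := by
  have hall := Eb_eq_zero hx h
  unfold Es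
  apply Finset.sum_eq_zero
  intro i _
  rw [hall i, fe_of_ge f le_rfl, sub_self]

lemma Es_ne_zero {x : Fin (n+1) → ℝ} (hx : x ∈ stdSimplex ℝ (Fin (n+1)))
    (f : II n ≃o II n) (h : Eb n x ≠ 0) : Es f x ≠ 0 := by
  intro hes
  apply h
  have hterm : ∀ i, fe f (x i) = c n := by
    intro i
    have := (Finset.sum_eq_zero_iff_of_nonneg
      (fun i _ => sub_nonneg.2 (fe_le f (x i)))).1 hes i (Finset.mem_univ i)
    linarith
  have hge : ∀ i, c n ≤ x i := fun i => fe_eq_top f (hx.1 i) (hterm i)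
  -- then all coordinates equal c, so Eb = 0
  have hsum : ∑ i, (x i - c n) = 0 := by
    rw [Finset.sum_sub_distrib, sum_c, hx.2, sub_self]
  have hall := (Finset.sum_eq_zero_iff_of_nonneg
    (fun i _ => sub_nonneg.2 (hge i))).1 hsum
  apply Finset.sum_eq_zero
  intro i _
  have := hall i (Finset.mem_univ i)
  have : x i = c n := by linarith
  simp [this]

lemma Fm_nonneg (f : II n ≃o II n) (x : Fin (n+1) → ℝ) (i : Fin (n+1)) : 0 ≤ Fm f x i :=
  add_nonneg (fe_nonneg f _) (mul_nonneg (le_max_right _ _) (ratio_nonneg f x))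

lemma Fm_sum {x : Fin (n+1) → ℝ} (hx : x ∈ stdSimplex ℝ (Fin (n+1)))
    (f : II n ≃o II n) : ∑ i, Fm f x i = 1 := by
  unfold Fm
  rw [Finset.sum_add_distrib, ← Finset.sum_mul]
  have h1 : ∑ i, fe f (x i) = 1 - Es f x := by
    unfold Es
    rw [Finset.sum_sub_distrib, sum_c]
    ring
  rw [h1]
  show 1 - Es f x + Eb n x * (Es f x / Eb n x) = 1
  by_cases h : Eb n x = 0
  · rw [Es_eq_zero_of_Eb hx f h, h]; ring
  · rw [mul_div_cancel₀ _ h]; ring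

lemma Fm_mem {x : Fin (n+1) → ℝ} (hx : x ∈ stdSimplex ℝ (Fin (n+1)))
    (f : II n ≃o II n) : Fm f x ∈ stdSimplex ℝ (Fin (n+1)) :=
  ⟨fun i => Fm_nonneg f x i, Fm_sum hx f⟩


lemma Fm_coord (f : II n ≃o II n) {x : Fin (n+1) → ℝ} (i : Fin (n+1))
    (h0 : 0 ≤ x i) (hc : x i ≤ c n) :
    Fm f x i = (f ⟨x i, ⟨h0, hc⟩⟩ : ℝ) := by
  unfold Fm
  rw [max_eq_right (by linarith), mul_comm, mul_zero, add_zero, fe_of_mem f ⟨h0, hc⟩]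

lemma Fm_center (f : II n ≃o II n) {x : Fin (n+1) → ℝ} (h : ∀ i, x i = c n) :
    ∀ i, Fm f x i = c n := by
  intro i
  unfold Fm
  rw [h i, fe_of_ge f le_rfl, sub_self, max_self, zero_mul, add_zero]

lemma Fm_comp (f g : II n ≃o II n) {x : Fin (n+1) → ℝ}
    (hx : x ∈ stdSimplex ℝ (Fin (n+1))) :
    Fm g (Fm f x) = Fm (f.trans g) x := by
  by_cases h : Eb n x = 0
  · have hall := Eb_eq_zero hx h
    funext i
    rw [Fm_center g (Fm_center f hall), Fm_center (f.trans g) hall]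
  · have hes : Es f x ≠ 0 := Es_ne_zero hx f h
    set r := Es f x / Eb n x with hr
    have hrpos : 0 < r := lt_of_le_of_ne (ratio_nonneg f x)
      (fun h0 => hes (by
        have : Es f x = Eb n x * r := (mul_div_cancel₀ _ h).symm
        rw [this, ← h0, mul_zero]))
    -- coordinatewise facts
    have key1 : ∀ i, fe g (Fm f x i) = fe (f.trans g) (x i) := by
      intro i
      rcases le_or_gt (x i) (c n) with hle | hlt
      · have : Fm f x i = fe f (x i) := by
          unfold Fm
          rw [max_eq_right (by linarith), mul_comm, mul_zero, add_zero]
        rw [this, fe_comp]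
      · have h1 : Fm f x i = c n + (x i - c n) * r := by
          unfold Fm
          rw [fe_of_ge f hlt.le, max_eq_left (by linarith)]
        have h2 : c n ≤ Fm f x i := by
          rw [h1]
          nlinarith
        rw [fe_of_ge g h2, fe_of_ge (f.trans g) hlt.le]
    have key2 : ∀ i, max (Fm f x i - c n) 0 = max (x i - c n) 0 * r := by
      intro i
      rcases le_or_gt (x i) (c n) with hle | hlt
      · have : Fm f x i = fe f (x i) := by
          unfold Fm
          rw [max_eq_right (by linarith), mul_comm, mul_zero, add_zero]
        rw [this, max_eq_right (by linarith [fe_le f (x i)]),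
          max_eq_right (by linarith), zero_mul]
      · have h1 : Fm f x i = c n + (x i - c n) * r := by
          unfold Fm
          rw [fe_of_ge f hlt.le, max_eq_left (by linarith)]
        rw [h1, max_eq_left (by nlinarith), max_eq_left (by linarith)]
        ring
    have hEb2 : Eb n (Fm f x) = Es f x := by
      unfold Eb
      calc ∑ i, max (Fm f x i - c n) 0 = ∑ i, max (x i - c n) 0 * r := by
            exact Finset.sum_congr rfl fun i _ => key2 i
      _ = Eb n x * r := by rw [← Finset.sum_mul]; rfl
      _ = Es f x := mul_div_cancel₀ _ h
    have hEs2 : Es g (Fm f x) = Es (f.trans g) x := by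
      unfold Es
      exact Finset.sum_congr rfl fun i _ => by rw [key1 i]
    funext i
    show fe g (Fm f x i) + max (Fm f x i - c n) 0 * (Es g (Fm f x) / Eb n (Fm f x))
      = Fm (f.trans g) x i
    rw [key1 i, key2 i, hEb2, hEs2]
    unfold Fm
    congr 1
    rw [hr]
    field_simp

lemma Fm_id {x : Fin (n+1) → ℝ} (hx : x ∈ stdSimplex ℝ (Fin (n+1))) :
    Fm (OrderIso.refl (II n)) x = x := by
  have hfe : ∀ i, fe (OrderIso.refl (II n)) (x i) = min (x i) (c n) := by
    intro i
    rcases le_or_gt (x i) (c n) with hle | hlt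
    · rw [fe_of_mem _ ⟨hx.1 i, hle⟩, min_eq_left hle]; rfl
    · rw [fe_of_ge _ hlt.le, min_eq_right hlt.le]
  by_cases h : Eb n x = 0
  · funext i
    rw [Fm_center _ (Eb_eq_zero hx h) i, Eb_eq_zero hx h i]
  · have hEs : Es (OrderIso.refl (II n)) x = Eb n x := by
      have hsum : ∑ i, (x i - c n) = 0 := by
        rw [Finset.sum_sub_distrib, sum_c, hx.2, sub_self]
      unfold Es Eb
      have : ∀ i, (c n - fe (OrderIso.refl (II n)) (x i))
          = max (x i - c n) 0 - (x i - c n) := by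
        intro i
        rw [hfe i]
        rcases le_or_gt (x i) (c n) with hle | hlt
        · rw [min_eq_left hle, max_eq_right (by linarith)]; ring
        · rw [min_eq_right hlt.le, max_eq_left (by linarith)]; ring
      rw [Finset.sum_congr rfl fun i _ => this i, Finset.sum_sub_distrib, hsum, sub_zero]
    funext i
    unfold Fm
    rw [hEs, div_self h, mul_one, hfe i]
    rcases le_or_gt (x i) (c n) with hle | hlt
    · rw [min_eq_left hle, max_eq_right (by linarith), add_zero]
    · rw [min_eq_right hlt.le, max_eq_left (by linarith)]; ring

lemma Fm_mono (f : II n ≃o II n) (x : Fin (n+1) → ℝ) (i j : Fin (n+1))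
    (h : x i ≤ x j) : Fm f x i ≤ Fm f x j := by
  unfold Fm
  have h1 : fe f (x i) ≤ fe f (x j) := fe_mono f h
  have h2 : max (x i - c n) 0 ≤ max (x j - c n) 0 :=
    max_le_max (by linarith) le_rfl
  have := ratio_nonneg f x
  nlinarith

lemma Fm_perm (f : II n ≃o II n) (x : Fin (n+1) → ℝ) (ϑ : Equiv.Perm (Fin (n+1))) :
    Fm f (fun i => x (ϑ i)) = fun i => Fm f x (ϑ i) := by
  have hEb : Eb n (fun i => x (ϑ i)) = Eb n x :=
    Equiv.sum_comp ϑ (fun i => max (x i - c n) 0)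
  have hEs : Es f (fun i => x (ϑ i)) = Es f x :=
    Equiv.sum_comp ϑ (fun i => c n - fe f (x i))
  funext i
  unfold Fm
  rw [hEb, hEs]


lemma max_le_Eb (x : Fin (n+1) → ℝ) (i : Fin (n+1)) : max (x i - c n) 0 ≤ Eb n x :=
  Finset.single_le_sum (f := fun j => max (x j - c n) 0)
    (fun j _ => le_max_right _ _) (Finset.mem_univ i)

lemma prod_le_Es (f : II n ≃o II n) (x : Fin (n+1) → ℝ) (i : Fin (n+1)) :
    max (x i - c n) 0 * (Es f x / Eb n x) ≤ Es f x := by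
  by_cases h : Eb n x = 0
  · have hm : max (x i - c n) 0 = 0 :=
      le_antisymm (h ▸ max_le_Eb x i) (le_max_right _ _)
    rw [hm, zero_mul]
    exact Es_nonneg f x
  · calc max (x i - c n) 0 * (Es f x / Eb n x)
        ≤ Eb n x * (Es f x / Eb n x) :=
          mul_le_mul_of_nonneg_right (max_le_Eb x i) (ratio_nonneg f x)
    _ = Es f x := mul_div_cancel₀ _ h

lemma Eb_cont : Continuous (Eb n) :=
  continuous_finset_sum _ fun i _ =>
    ((continuous_apply i).sub continuous_const).max continuous_const

lemma Es_cont (f : II n ≃o II n) : Continuous (Es f) :=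
  continuous_finset_sum _ fun i _ =>
    continuous_const.sub ((fe_cont f).comp (continuous_apply i))

lemma Fm_cont (f : II n ≃o II n) :
    Continuous (fun x : {x : Fin (n+1) → ℝ // x ∈ stdSimplex ℝ (Fin (n+1))} =>
      Fm f x.1) := by
  apply continuous_pi
  intro i
  have hA : Continuous (fun x : {x : Fin (n+1) → ℝ // x ∈ stdSimplex ℝ (Fin (n+1))} =>
      fe f (x.1 i)) :=
    (fe_cont f).comp ((continuous_apply i).comp continuous_subtype_val)
  have hB : Continuous (fun x : {x : Fin (n+1) → ℝ // x ∈ stdSimplex ℝ (Fin (n+1))} =>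
      max (x.1 i - c n) 0 * (Es f x.1 / Eb n x.1)) := by
    rw [continuous_iff_continuousAt]
    intro x₀
    by_cases h : Eb n x₀.1 = 0
    · have hval : max (x₀.1 i - c n) 0 * (Es f x₀.1 / Eb n x₀.1) = 0 := by
        have hm : max (x₀.1 i - c n) 0 = 0 :=
          le_antisymm (h ▸ max_le_Eb x₀.1 i) (le_max_right _ _)
        rw [hm, zero_mul]
      unfold ContinuousAt
      beta_reduce
      rw [hval]
      apply tendsto_of_tendsto_of_tendsto_of_le_of_le
        (g := fun _ => (0:ℝ)) (h := fun x => Es f x.1)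
      · exact tendsto_const_nhds
      · have hEs0 : Es f x₀.1 = 0 := Es_eq_zero_of_Eb x₀.2 f h
        have : Filter.Tendsto (fun x : {x : Fin (n+1) → ℝ // x ∈ stdSimplex ℝ (Fin (n+1))} =>
            Es f x.1) (nhds x₀) (nhds (Es f x₀.1)) :=
          ((Es_cont f).comp continuous_subtype_val).continuousAt
        rwa [hEs0] at this
      · intro x
        exact mul_nonneg (le_max_right _ _) (ratio_nonneg f x.1)
      · intro x
        exact prod_le_Es f x.1 i
    · exact ((((continuous_apply i).comp continuous_subtype_val).sub
        continuous_const).max continuous_const).continuousAt.mul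
        ((((Es_cont f).comp continuous_subtype_val).continuousAt).div
          (((Eb_cont).comp continuous_subtype_val).continuousAt) h)
  exact hA.add hB

end LamAux

/-- the injective group morphism `Λ_n` from the group of increasing
homeomorphisms of `[0, 1/(n+1)]` (equivalently, order-isomorphisms of the interval)
into the group of self-homeomorphisms of `Δ_n`, with image inside `COMFORT (Δ_n)`,
acting by `f` on all coordinates `≤ 1/(n+1)`. -/
theorem exists_lambda_embedding (n : ℕ) (hn : 1 ≤ n) :
    ∃ Λ : (Set.Icc (0:ℝ) (1/((n:ℝ)+1)) ≃o Set.Icc (0:ℝ) (1/((n:ℝ)+1))) →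
            (Spx (n+1) ≃ₜ Spx (n+1)),
      Function.Injective Λ ∧
      (∀ f g, Λ (f.trans g) = (Λ f).trans (Λ g)) ∧
      Λ (OrderIso.refl _) = Homeomorph.refl _ ∧
      ∀ f, IsComfort (Λ f) ∧
        ∀ (x : Spx (n+1)) (i : Fin (n+1)) (hx : x.1 i ≤ 1/((n:ℝ)+1)),
          ((Λ f) x).1 i = (f ⟨x.1 i, ⟨x.2.1 i, hx⟩⟩ : ℝ) := by
  classical
  have hc : LamAux.c n = 1/((n:ℝ)+1) := rfl
  refine ⟨fun f => Homeomorph.mk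
    ⟨fun x => ⟨LamAux.Fm f x.1, LamAux.Fm_mem x.2 f⟩,
     fun x => ⟨LamAux.Fm f.symm x.1, LamAux.Fm_mem x.2 f.symm⟩,
     fun x => Subtype.ext (by
       show LamAux.Fm f.symm (LamAux.Fm f x.1) = x.1
       rw [LamAux.Fm_comp f f.symm x.2, OrderIso.self_trans_symm, LamAux.Fm_id x.2]),
     fun x => Subtype.ext (by
       show LamAux.Fm f (LamAux.Fm f.symm x.1) = x.1
       rw [LamAux.Fm_comp f.symm f x.2, OrderIso.symm_trans_self, LamAux.Fm_id x.2])⟩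
    ((LamAux.Fm_cont f).subtype_mk _) ((LamAux.Fm_cont f.symm).subtype_mk _),
    ?_, ?_, ?_, ?_⟩
  · -- injectivity
    intro f g h
    apply OrderIso.ext
    funext t
    have hn0 : (n:ℝ) ≠ 0 := by
      have : (1:ℝ) ≤ (n:ℝ) := by exact_mod_cast hn
      linarith
    have hc1 : LamAux.c n ≤ 1 := by
      rw [hc]
      rw [div_le_one (by positivity)]
      linarith [Nat.cast_nonneg (α := ℝ) n]
    have ht1 : (t:ℝ) ≤ 1 := le_trans t.2.2 hc1
    set p : Fin (n+1) → ℝ := fun i => if i = 0 then (t:ℝ) else (1 - (t:ℝ))/n with hp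
    have hpmem : p ∈ stdSimplex ℝ (Fin (n+1)) := by
      constructor
      · intro i
        by_cases hi : i = 0
        · simp [hp, hi, t.2.1]
        · simp only [hp, if_neg hi]
          exact div_nonneg (by linarith) (Nat.cast_nonneg n)
      · rw [Fin.sum_univ_succ]
        simp only [hp, if_pos rfl]
        have : ∀ i : Fin n, (if (i.succ : Fin (n+1)) = 0 then (t:ℝ) else (1 - (t:ℝ))/n)
            = (1 - (t:ℝ))/n := fun i => if_neg (Fin.succ_ne_zero i)
        rw [Finset.sum_congr rfl fun i _ => this i, Finset.sum_const,
          Finset.card_univ, Fintype.card_fin, nsmul_eq_mul]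
        field_simp
        ring
    have hp0 : p 0 = (t:ℝ) := if_pos rfl
    have hkey := congrArg (fun F : Spx (n+1) ≃ₜ Spx (n+1) => F ⟨p, hpmem⟩) h
    have h2 : LamAux.Fm f p = LamAux.Fm g p := congrArg Subtype.val hkey
    have h3 := congrFun h2 0
    have hple : p 0 ≤ LamAux.c n := by rw [hp0]; exact t.2.2
    rw [LamAux.Fm_coord f 0 (hpmem.1 0) hple, LamAux.Fm_coord g 0 (hpmem.1 0) hple] at h3
    have harg : (⟨p 0, ⟨hpmem.1 0, hple⟩⟩ : LamAux.II n) = t := Subtype.ext hp0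
    rw [harg] at h3
    exact Subtype.ext h3
  · -- composition
    intro f g
    apply Homeomorph.ext
    intro x
    exact Subtype.ext (LamAux.Fm_comp f g x.2).symm
  · -- identity
    apply Homeomorph.ext
    intro x
    exact Subtype.ext (LamAux.Fm_id x.2)
  · -- comfort and coordinate action
    intro f
    constructor
    · constructor
      · intro ϑ x
        exact LamAux.Fm_perm f x.1 ϑ
      · intro x i j hij
        exact LamAux.Fm_mono f x.1 i j hij
    · intro x i hx
      have hx' : x.1 i ≤ LamAux.c n := hx
      rw [show (((Homeomorph.mk
        ⟨fun x => ⟨LamAux.Fm f x.1, LamAux.Fm_mem x.2 f⟩,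
         fun x => ⟨LamAux.Fm f.symm x.1, LamAux.Fm_mem x.2 f.symm⟩, _, _⟩ _ _ : Spx (n+1) ≃ₜ Spx (n+1)))
        x).1 i = LamAux.Fm f x.1 i from rfl]
      exact LamAux.Fm_coord f i (x.2.1 i) hx'


end
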